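/- Let n ≥ 1 and let Ω be a real n×n matrix with IsUnit (det Ω). Let A : ℝ → Matrix (Fin n) (Fin n) ℝ be differentiable with A(t) invertible for every t, and let c : ℝ → ℝ be differentiable, such that A(t)ᵀ · Ω · A(t) = exp(2·c(t)) • Ω for all t ∈ ℝ. Then for every t: trace( A(t)⁻¹ · (deriv A)(t) ) = n · (deriv c)(t). (This is the relation Σ_{i,j} b^j_i Ω^i_j = n σ₀ linking the trace of the logarithmic derivative of the Jacobian to the conformal factor, for a constant metric Ω.) -/

import Mathlib

open Matrix

attribute [local instance] Matrix.normedAddCommGroup Matrix.normedSpace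

private lemma matrix_mul_hasDerivAt {n : ℕ} {f g : ℝ → Matrix (Fin n) (Fin n) ℝ}
    {f' g' : Matrix (Fin n) (Fin n) ℝ} {t : ℝ}
    (hf : HasDerivAt f f' t) (hg : HasDerivAt g g' t) :
    HasDerivAt (fun t => f t * g t) (f' * g t + f t * g') t := by
  refine hasDerivAt_pi.2 ?_
  intro i
  rw [hasDerivAt_pi]
  intro j
  have hfe : ∀ a b, HasDerivAt (fun t => f t a b) (f' a b) t := fun a b =>
    (hasDerivAt_pi.1 ((hasDerivAt_pi.1 hf) a)) b
  have hge : ∀ a b, HasDerivAt (fun t => g t a b) (g' a b) t := fun a b =>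
    (hasDerivAt_pi.1 ((hasDerivAt_pi.1 hg) a)) b
  have : HasDerivAt (fun t => ∑ k, f t i k * g t k j)
      (∑ k, (f' i k * g t k j + f t i k * g' k j)) t :=
    HasDerivAt.fun_sum fun k _ => (hfe i k).mul (hge k j)
  convert this using 1
  · rfl
  · rfl
  · funext x; simp [Matrix.mul_apply]
  · simp [Matrix.mul_apply, Matrix.add_apply, Finset.sum_add_distrib]

private lemma matrix_transpose_hasDerivAt {n : ℕ} {f : ℝ → Matrix (Fin n) (Fin n) ℝ}
    {f' : Matrix (Fin n) (Fin n) ℝ} {t : ℝ} (hf : HasDerivAt f f' t) :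
    HasDerivAt (fun t => (f t)ᵀ) f'ᵀ t := by
  refine hasDerivAt_pi.2 ?_
  intro i
  rw [hasDerivAt_pi]
  intro j
  exact (hasDerivAt_pi.1 ((hasDerivAt_pi.1 hf) j)) i

/-- For a differentiable family `A(t)` of invertible Jacobian matrices satisfying the
conformal condition `A(t)ᵀ Ω A(t) = e^{2c(t)} Ω` for an invertible constant metric `Ω`,
the trace of the logarithmic derivative of `A` equals `n` times the derivative of the
conformal factor: `trace(A⁻¹ A') = n c'`. -/

theorem trace_log_deriv_conformal
    (n : ℕ) (hn : 1 ≤ n)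
    (Ω : Matrix (Fin n) (Fin n) ℝ) (hΩ : IsUnit Ω.det)
    (A : ℝ → Matrix (Fin n) (Fin n) ℝ) (hA : Differentiable ℝ A)
    (hAinv : ∀ t, IsUnit (A t).det)
    (c : ℝ → ℝ) (hc : Differentiable ℝ c)
    (h : ∀ t, (A t)ᵀ * Ω * A t = Real.exp (2 * c t) • Ω) :
    ∀ t, Matrix.trace ((A t)⁻¹ * deriv A t) = n * deriv c t := by
  intro t
  set E := A t with hE
  set E' := deriv A t with hE'
  set σ := deriv c t with hσ
  set e := Real.exp (2 * c t) with he
  have he0 : e ≠ 0 := Real.exp_ne_zero _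
  have hA' : HasDerivAt A E' t := (hA t).hasDerivAt
  have hc' : HasDerivAt c σ t := (hc t).hasDerivAt
  -- derivative of LHS of the conformal relation
  have hL : HasDerivAt (fun t => (A t)ᵀ * Ω * A t)
      ((E'ᵀ * Ω + Eᵀ * 0) * E + Eᵀ * Ω * E') t :=
    matrix_mul_hasDerivAt
      (matrix_mul_hasDerivAt (matrix_transpose_hasDerivAt hA') (hasDerivAt_const t Ω)) hA'
  -- derivative of RHS
  have hR : HasDerivAt (fun t => Real.exp (2 * c t) • Ω) ((e * (2 * σ)) • Ω) t :=
    HasDerivAt.smul_const ((hc'.const_mul 2).exp) Ω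
  have hfun : (fun t => (A t)ᵀ * Ω * A t) = (fun t => Real.exp (2 * c t) • Ω) :=
    funext h
  have K : E'ᵀ * Ω * E + Eᵀ * Ω * E' = (e * (2 * σ)) • Ω := by
    have := (hfun ▸ hL).unique hR
    simpa using this
  -- introduce B = E⁻¹ E'
  set B := E⁻¹ * E' with hB
  have hEB : E * B = E' := by
    rw [hB, ← Matrix.mul_assoc, Matrix.mul_nonsing_inv E (hAinv t), Matrix.one_mul]
  -- rewrite K using E' = E B and the conformal relation
  have K2 : e • (Bᵀ * Ω) + e • (Ω * B) = (e * (2 * σ)) • Ω := by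
    calc e • (Bᵀ * Ω) + e • (Ω * B)
        = Bᵀ * (e • Ω) + (e • Ω) * B := by
          rw [Matrix.mul_smul, Matrix.smul_mul]
      _ = Bᵀ * (Eᵀ * Ω * E) + (Eᵀ * Ω * E) * B := by rw [← h t]
      _ = (Bᵀ * Eᵀ) * Ω * E + Eᵀ * Ω * (E * B) := by
          simp only [Matrix.mul_assoc]
      _ = E'ᵀ * Ω * E + Eᵀ * Ω * E' := by
          rw [← Matrix.transpose_mul, hEB]
      _ = (e * (2 * σ)) • Ω := K
  have K3 : Bᵀ * Ω + Ω * B = (2 * σ) • Ω := by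
    have h5 := congrArg (fun M => e⁻¹ • M) K2
    simpa [smul_add, smul_smul, ← mul_assoc, inv_mul_cancel₀ he0] using h5
  -- take traces after multiplying by Ω⁻¹ on the left
  have hΩinv : Ω⁻¹ * Ω = 1 := Matrix.nonsing_inv_mul Ω hΩ
  have K4 : Ω⁻¹ * (Bᵀ * Ω) + B = (2 * σ) • (1 : Matrix (Fin n) (Fin n) ℝ) := by
    calc Ω⁻¹ * (Bᵀ * Ω) + B
        = Ω⁻¹ * (Bᵀ * Ω) + Ω⁻¹ * (Ω * B) := by
          rw [← Matrix.mul_assoc Ω⁻¹ Ω B, hΩinv, Matrix.one_mul]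
      _ = Ω⁻¹ * (Bᵀ * Ω + Ω * B) := by rw [Matrix.mul_add]
      _ = Ω⁻¹ * ((2 * σ) • Ω) := by rw [K3]
      _ = (2 * σ) • (1 : Matrix (Fin n) (Fin n) ℝ) := by
          rw [Matrix.mul_smul, hΩinv]
  have htr1 : Matrix.trace (Ω⁻¹ * (Bᵀ * Ω)) = Matrix.trace B := by
    rw [← Matrix.mul_assoc, Matrix.trace_mul_cycle,
      Matrix.mul_nonsing_inv Ω hΩ, Matrix.one_mul, Matrix.trace_transpose]
  have htr := congrArg Matrix.trace K4
  rw [Matrix.trace_add, htr1, Matrix.trace_smul, Matrix.trace_one] at htr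
  simp only [smul_eq_mul, Fintype.card_fin] at htr
  show Matrix.trace B = n * σ
  nlinarith [htr]
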